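/- Fix finite sets X, Y, a set S ⊆ X × Y, a function f : S → {−1, 1}, reals ε ≥ 0, δ ∈ (0, 1], β > 0, and a probability distribution μ on X × Y. Assume the corruption property: for every rectangle R in X × Y, if μ(R) > β then μ(R ∩ f⁻¹(1)) > δ · μ(R ∩ f⁻¹(−1)). Define α : X × Y → ℝ≥0 by α(x,y) = μ(x,y)/β if (x,y) ∈ f⁻¹(−1), α(x,y) = μ(x,y)/(δβ) if (x,y) ∈ f⁻¹(1), and α(x,y) = 0 if (x,y) ∉ S. Then: (a) for every rectangle R, ∑_{(x,y) ∈ R ∩ f⁻¹(−1)} α(x,y) − ∑_{(x,y) ∈ R ∩ f⁻¹(1)} α(x,y) ≤ 1; and (b) (1 − ε) ∑_{(x,y) ∈ f⁻¹(−1)} α(x,y) − ε ∑_{(x,y) ∈ f⁻¹(1)} α(x,y) ≥ (1/β)(μ(f⁻¹(−1)) − ε/δ). -/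

import Mathlib

open Finset

/-- The corruption property yields a feasible point of the dual form of
the rectangle/corruption bound whose objective value is at least
`(1/β)(μ(f⁻¹(-1)) - ε/δ)`. -/
theorem statement_10 {X Y : Type*} [Fintype X] [Fintype Y]
    [DecidableEq X] [DecidableEq Y]
    (S : Finset (X × Y)) (f : X × Y → ℤ)
    (hf : ∀ p ∈ S, f p = -1 ∨ f p = 1)
    (ε δ β : ℝ) (hε : 0 ≤ ε) (hδ : 0 < δ) (hδ1 : δ ≤ 1) (hβ : 0 < β)
    (μ : X × Y → ℝ) (hμ0 : ∀ p, 0 ≤ μ p) (hμ1 : ∑ p, μ p = 1)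
    (hcorr : ∀ R : Finset X × Finset Y,
      β < ∑ p ∈ R.1 ×ˢ R.2, μ p →
      δ * ∑ p ∈ (R.1 ×ˢ R.2).filter (fun p => p ∈ S ∧ f p = -1), μ p <
        ∑ p ∈ (R.1 ×ˢ R.2).filter (fun p => p ∈ S ∧ f p = 1), μ p)
    (α : X × Y → ℝ)
    (hαneg : ∀ p ∈ S, f p = -1 → α p = μ p / β)
    (hαpos : ∀ p ∈ S, f p = 1 → α p = μ p / (δ * β))
    (hαout : ∀ p ∉ S, α p = 0) :
    (∀ R : Finset X × Finset Y,
      ∑ p ∈ (R.1 ×ˢ R.2).filter (fun p => p ∈ S ∧ f p = -1), α p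
        - ∑ p ∈ (R.1 ×ˢ R.2).filter (fun p => p ∈ S ∧ f p = 1), α p ≤ 1) ∧
    (1 / β) * ((∑ p ∈ univ.filter (fun p : X × Y => p ∈ S ∧ f p = -1), μ p) - ε / δ) ≤
      (1 - ε) * ∑ p ∈ univ.filter (fun p : X × Y => p ∈ S ∧ f p = -1), α p
        - ε * ∑ p ∈ univ.filter (fun p : X × Y => p ∈ S ∧ f p = 1), α p := by
  have hsneg : ∀ T : Finset (X × Y),
      ∑ p ∈ T.filter (fun p => p ∈ S ∧ f p = -1), α p
        = (∑ p ∈ T.filter (fun p => p ∈ S ∧ f p = -1), μ p) / β := by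
    intro T
    rw [sum_div]
    refine sum_congr rfl fun p hp => ?_
    simp only [mem_filter] at hp
    exact hαneg p hp.2.1 hp.2.2
  have hspos : ∀ T : Finset (X × Y),
      ∑ p ∈ T.filter (fun p => p ∈ S ∧ f p = 1), α p
        = (∑ p ∈ T.filter (fun p => p ∈ S ∧ f p = 1), μ p) / (δ * β) := by
    intro T
    rw [sum_div]
    refine sum_congr rfl fun p hp => ?_
    simp only [mem_filter] at hp
    exact hαpos p hp.2.1 hp.2.2
  constructor
  · intro R
    rw [hsneg, hspos]
    set N := ∑ p ∈ (R.1 ×ˢ R.2).filter (fun p => p ∈ S ∧ f p = -1), μ p with hN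
    set P := ∑ p ∈ (R.1 ×ˢ R.2).filter (fun p => p ∈ S ∧ f p = 1), μ p with hP
    have hN0 : 0 ≤ N := sum_nonneg fun p _ => hμ0 p
    have hP0 : 0 ≤ P := sum_nonneg fun p _ => hμ0 p
    by_cases h : β < ∑ p ∈ R.1 ×ˢ R.2, μ p
    · have hc := hcorr R h
      have h1 : N / β ≤ P / (δ * β) := by
        rw [div_le_div_iff₀ hβ (by positivity)]
        nlinarith
      linarith
    · push_neg at h
      have hNle : N ≤ ∑ p ∈ R.1 ×ˢ R.2, μ p :=
        sum_le_sum_of_subset_of_nonneg (filter_subset _ _) fun p _ _ => hμ0 p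
      have h1 : N / β ≤ 1 := by rw [div_le_one hβ]; linarith
      have h2 : 0 ≤ P / (δ * β) := by positivity
      linarith
  · rw [hsneg, hspos]
    set N := ∑ p ∈ univ.filter (fun p : X × Y => p ∈ S ∧ f p = -1), μ p with hN
    set P := ∑ p ∈ univ.filter (fun p : X × Y => p ∈ S ∧ f p = 1), μ p with hP
    have hN0 : 0 ≤ N := sum_nonneg fun p _ => hμ0 p
    have hP0 : 0 ≤ P := sum_nonneg fun p _ => hμ0 p
    have hdisj : Disjoint (univ.filter (fun p : X × Y => p ∈ S ∧ f p = -1))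
        (univ.filter (fun p : X × Y => p ∈ S ∧ f p = 1)) := by
      rw [disjoint_filter]
      rintro p _ ⟨_, h1⟩ ⟨_, h2⟩
      rw [h1] at h2; norm_num at h2
    have hNP : N + P ≤ 1 := by
      rw [hN, hP, ← sum_union hdisj, ← hμ1]
      exact sum_le_sum_of_subset_of_nonneg (subset_univ _) fun p _ _ => hμ0 p
    rw [div_mul_eq_mul_div, one_mul, div_le_iff₀ hβ]
    have hβ' : β ≠ 0 := hβ.ne'
    have hδ' : δ ≠ 0 := hδ.ne'
    field_simp
    have key : ε * (N * δ + P) ≤ ε := by nlinarith [mul_nonneg hε hN0]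
    nlinarith [mul_nonneg (mul_nonneg (mul_pos hβ hβ).le hδ.le) (sub_nonneg.2 key)]
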